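/- Let G = ℤ/p for p prime and L its Cayley table. There is no way to select a single cell from each row and each column of L (i.e., a permutation σ of G selecting cells (x, σ(x))) such that the set of symbols {x + σ(x) : x ∈ G} has exactly two distinct elements. -/

import Mathlib

theorem no_two_symbol_selection_of_prime (p : ℕ) [hp : Fact p.Prime] :
    ¬ ∃ σ : Equiv.Perm (ZMod p),
      (Finset.univ.image fun x : ZMod p => x + σ x).card = 2 := by
  rintro ⟨σ, hcard⟩
  obtain ⟨a, b, hab, himg⟩ := Finset.card_eq_two.mp hcard
  -- every symbol is a or b
  have hmem : ∀ x : ZMod p, x + σ x = a ∨ x + σ x = b := by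
    intro x
    have : x + σ x ∈ Finset.univ.image fun x : ZMod p => x + σ x :=
      Finset.mem_image_of_mem _ (Finset.mem_univ x)
    rw [himg] at this
    simpa using this
  -- total sum is zero
  have hsum0 : ∑ x : ZMod p, (x + σ x) = 0 := by
    rw [Finset.sum_add_distrib, Equiv.sum_comp σ (fun x => x)]
    have hneg : ∑ x : ZMod p, (-x) = ∑ x : ZMod p, x :=
      Equiv.sum_comp (Equiv.neg (ZMod p)) (fun x => x)
    calc (∑ x : ZMod p, x) + ∑ x : ZMod p, x
        = (∑ x : ZMod p, x) + ∑ x : ZMod p, (-x) := by rw [hneg]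
      _ = ∑ x : ZMod p, (x + -x) := by rw [Finset.sum_add_distrib]
      _ = 0 := by simp
  set A := Finset.univ.filter (fun x : ZMod p => x + σ x = a) with hA
  set m := A.card with hm
  have hsplit : ∑ x : ZMod p, (x + σ x) = (m : ZMod p) * a + ((p - m : ℕ) : ZMod p) * b := by
    rw [← Finset.sum_filter_add_sum_filter_not Finset.univ (fun x => x + σ x = a)]
    have h1 : ∑ x ∈ A, (x + σ x) = (m : ZMod p) * a := by
      rw [Finset.sum_congr rfl (fun x hx => (Finset.mem_filter.mp hx).2)]
      simp [nsmul_eq_mul]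
      exact Or.inl rfl
    have h2 : ∑ x ∈ Finset.univ.filter (fun x => ¬ (x + σ x = a)), (x + σ x)
        = ((p - m : ℕ) : ZMod p) * b := by
      have hcardB : (Finset.univ.filter (fun x : ZMod p => ¬ (x + σ x = a))).card = p - m := by
        have := Finset.card_filter_add_card_filter_not
          (s := (Finset.univ : Finset (ZMod p))) (p := fun x => x + σ x = a)
        simp only [Finset.card_univ, ZMod.card] at this
        have hm' : (Finset.filter (fun x : ZMod p => x + σ x = a) Finset.univ).card = m := rfl
        omega
      rw [Finset.sum_congr rfl (fun x hx => ?_)]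
      · rw [Finset.sum_const, hcardB, nsmul_eq_mul]
      · rcases hmem x with h | h
        · exact absurd h (Finset.mem_filter.mp hx).2
        · exact h
    rw [h1, h2]
  have hle : m ≤ p := by
    have := Finset.card_filter_le (Finset.univ : Finset (ZMod p)) (fun x => x + σ x = a)
    simpa [ZMod.card] using this
  have hkey : (m : ZMod p) * (a - b) = 0 := by
    have hp0 : ((p : ℕ) : ZMod p) = 0 := ZMod.natCast_self p
    have : ((p - m : ℕ) : ZMod p) = -(m : ZMod p) := by
      have : ((p - m : ℕ) : ZMod p) + (m : ZMod p) = ((p : ℕ) : ZMod p) := by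
        rw [← Nat.cast_add]
        congr 1
        omega
      rw [hp0] at this
      linear_combination this
    rw [hsplit, this] at hsum0
    ring_nf
    ring_nf at hsum0
    linear_combination hsum0
  -- a - b ≠ 0, so (m : ZMod p) = 0
  have hmzero : (m : ZMod p) = 0 := by
    rcases mul_eq_zero.mp hkey with h | h
    · exact h
    · exact absurd (sub_eq_zero.mp h) hab
  have hdvd : p ∣ m := (ZMod.natCast_eq_zero_iff m p).mp hmzero
  -- m ≠ 0
  have hm_pos : 0 < m := by
    have ha : a ∈ Finset.univ.image fun x : ZMod p => x + σ x := by
      rw [himg]; simp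
    obtain ⟨x, _, hx⟩ := Finset.mem_image.mp ha
    have : x ∈ A := Finset.mem_filter.mpr ⟨Finset.mem_univ x, hx⟩
    exact Finset.card_pos.mpr ⟨x, this⟩
  -- m ≠ p
  have hm_ne : m ≠ p := by
    intro h
    have hAuniv : A = Finset.univ := Finset.eq_univ_of_card A (by rw [← hm, h, ZMod.card])
    have hb : b ∈ Finset.univ.image fun x : ZMod p => x + σ x := by
      rw [himg]; simp
    obtain ⟨x, _, hx⟩ := Finset.mem_image.mp hb
    have : x ∈ A := hAuniv ▸ Finset.mem_univ x
    have := (Finset.mem_filter.mp this).2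
    rw [hx] at this
    exact hab this.symm
  have := Nat.le_of_dvd hm_pos hdvd
  omega
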